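/- Let λ₁ ≤ … ≤ λ_N be real numbers and let k' < k be real numbers ≥ 1 with ⌊k⌋ ≤ N-1. If λ₁ + … + λ_{⌊k'⌋} + (k'-⌊k'⌋)λ_{⌊k'⌋+1} ≥ 0, then either λ₁ + … + λ_{⌊k⌋} + (k-⌊k⌋)λ_{⌊k⌋+1} > 0, or λ₁ ≥ 0 (i.e., all λᵢ are nonnegative). -/
import Mathlib


open Finset in
/-- If `k' < k` and the tuple `λ₁ ≤ … ≤ λ_N` is `k'`-nonnegative, then either it is
`k`-positive or all `λᵢ` are nonnegative. -/
theorem k_pos_or_nonneg_of_k'_nonneg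
    (N : ℕ) (lam : Fin N → ℝ) (hmono : Monotone lam)
    (k k' : ℝ) (hk' : 1 ≤ k') (hk'k : k' < k)
    (h1 : Int.toNat ⌊k'⌋ < N) (h2 : Int.toNat ⌊k⌋ < N)
    (hnonneg : 0 ≤ (∑ i ∈ univ.filter (fun i : Fin N => (i : ℕ) < Int.toNat ⌊k'⌋), lam i)
        + (k' - (Int.toNat ⌊k'⌋ : ℝ)) * lam ⟨Int.toNat ⌊k'⌋, h1⟩) :
    (0 < (∑ i ∈ univ.filter (fun i : Fin N => (i : ℕ) < Int.toNat ⌊k⌋), lam i)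
        + (k - (Int.toNat ⌊k⌋ : ℝ)) * lam ⟨Int.toNat ⌊k⌋, h2⟩)
    ∨ (∀ i, 0 ≤ lam i) := by
  set m' : ℕ := Int.toNat ⌊k'⌋ with hm'def
  set m : ℕ := Int.toNat ⌊k⌋ with hmdef
  set g : ℕ → ℝ := fun j => if h : j < N then lam ⟨j, h⟩ else 0 with hg
  -- basic facts
  have hk1 : (1:ℝ) ≤ k := le_of_lt (lt_of_le_of_lt hk' hk'k)
  have hfk' : (1:ℤ) ≤ ⌊k'⌋ := Int.le_floor.mpr (by exact_mod_cast hk')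
  have hfk : (1:ℤ) ≤ ⌊k⌋ := Int.le_floor.mpr (by exact_mod_cast hk1)
  have hm'1 : 1 ≤ m' := by omega
  have hm'm : m' ≤ m := by
    have := Int.floor_le_floor (le_of_lt hk'k)
    omega
  have hcast' : ((m' : ℤ) : ℝ) = (⌊k'⌋ : ℝ) := by
    rw [hm'def, Int.toNat_of_nonneg (by omega)]
  have hcast : ((m : ℤ) : ℝ) = (⌊k⌋ : ℝ) := by
    rw [hmdef, Int.toNat_of_nonneg (by omega)]
  have hf'0 : 0 ≤ k' - (m' : ℝ) := by
    have := Int.floor_le k'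
    push_cast at hcast' ⊢
    linarith [hcast' ▸ this]
  have hf0 : 0 ≤ k - (m : ℝ) := by
    have := Int.floor_le k
    push_cast at hcast ⊢
    linarith [hcast ▸ this]
  -- rewrite the filtered sums in terms of g
  have hsum : ∀ n, n ≤ N → (∑ i ∈ univ.filter (fun i : Fin N => (i : ℕ) < n), lam i)
      = ∑ j ∈ Finset.range n, g j := by
    intro n hn
    calc (∑ i ∈ univ.filter (fun i : Fin N => (i : ℕ) < n), lam i)
        = ∑ i : Fin N, (if (i : ℕ) < n then g (i : ℕ) else 0) := by
          rw [Finset.sum_filter]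
          refine Finset.sum_congr rfl fun i _ => ?_
          simp [hg, i.isLt]
      _ = ∑ j ∈ Finset.range N, (if j < n then g j else 0) :=
          Fin.sum_univ_eq_sum_range (fun j => if j < n then g j else 0) N
      _ = ∑ j ∈ Finset.range n, g j := by
          rw [← Finset.sum_filter]
          congr 1
          ext j
          simp only [Finset.mem_filter, Finset.mem_range]
          omega
  have hgm' : g m' = lam ⟨m', h1⟩ := by simp [hg, h1]
  have hgm : g m = lam ⟨m, h2⟩ := by simp [hg, h2]
  -- monotonicity of g on valid indices
  have hgmono : ∀ a b : ℕ, a ≤ b → b < N → g a ≤ g b := by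
    intro a b hab hbN
    have haN : a < N := lt_of_le_of_lt hab hbN
    simp only [hg, dif_pos haN, dif_pos hbN]
    exact hmono (by exact_mod_cast hab : (⟨a, haN⟩ : Fin N) ≤ ⟨b, hbN⟩)
  -- the key inequality: S(k) ≥ S(k') + (k - k') * g m'
  have hdiff : (∑ j ∈ Finset.range m, g j) - (∑ j ∈ Finset.range m', g j)
      = ∑ j ∈ Finset.Ico m' m, g j := (Finset.sum_Ico_eq_sub g hm'm).symm
  have hIco : ((m - m' : ℕ) : ℝ) * g m' ≤ ∑ j ∈ Finset.Ico m' m, g j := by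
    have := Finset.card_nsmul_le_sum (Finset.Ico m' m) g (g m')
      (fun j hj => by
        rw [Finset.mem_Ico] at hj
        exact hgmono m' j hj.1 (lt_of_lt_of_le hj.2 (le_of_lt h2)))
    simpa [Nat.card_Ico, nsmul_eq_mul] using this
  have hcast2 : ((m - m' : ℕ) : ℝ) = (m : ℝ) - (m' : ℝ) := by
    push_cast [Nat.cast_sub hm'm]; ring
  have hgm'm : g m' ≤ g m := hgmono m' m hm'm h2
  have hkey : (∑ j ∈ Finset.range m', g j) + (k' - (m' : ℝ)) * g m' + (k - k') * g m'
      ≤ (∑ j ∈ Finset.range m, g j) + (k - (m : ℝ)) * g m := by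
    have h3 : (k - (m : ℝ)) * g m' ≤ (k - (m : ℝ)) * g m :=
      mul_le_mul_of_nonneg_left hgm'm hf0
    have h4 : ((m : ℝ) - (m' : ℝ)) * g m' ≤ ∑ j ∈ Finset.Ico m' m, g j := by
      rw [← hcast2]; exact hIco
    nlinarith [hdiff]
  rw [hsum m' (le_of_lt h1), hgm'.symm] at hnonneg
  by_cases hpos : 0 < (∑ i ∈ univ.filter (fun i : Fin N => (i : ℕ) < m), lam i)
      + (k - (m : ℝ)) * lam ⟨m, h2⟩
  · exact Or.inl hpos
  · right
    rw [hsum m (le_of_lt h2), ← hgm] at hpos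
    push_neg at hpos
    -- g m' ≤ 0
    have hgm'0 : g m' ≤ 0 := by nlinarith
    -- all terms before m' are ≤ 0, so S(k') ≤ g 0, forcing g 0 ≥ 0
    have h0N : 0 < N := lt_of_le_of_lt (Nat.zero_le m') h1
    have hA : (∑ j ∈ Finset.range m', g j) ≤ g 0 := by
      have : (∑ j ∈ Finset.range m', g j) = g 0 + ∑ j ∈ Finset.Ico 1 m', g j := by
        rw [Finset.range_eq_Ico, ← Finset.sum_eq_sum_Ico_succ_bot (by omega : 0 < m')]
      rw [this]
      have : (∑ j ∈ Finset.Ico 1 m', g j) ≤ 0 :=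
        Finset.sum_nonpos fun j hj => by
          rw [Finset.mem_Ico] at hj
          exact le_trans (hgmono j m' (le_of_lt hj.2) h1) hgm'0
      linarith
    have hg0 : 0 ≤ g 0 := by nlinarith
    intro i
    have : g 0 ≤ g (i : ℕ) := hgmono 0 (i : ℕ) (Nat.zero_le _) i.isLt
    have hgi : g (i : ℕ) = lam i := by simp [hg, i.isLt]
    linarith [hgi ▸ this]
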